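/- For every real x ≥ 0, 1 - Φ(x) < 4φ(x)/(√(8 + x²) + 3x) (Sampford's upper bound). -/

import Mathlib

open MeasureTheory Real

/-- Standard Gaussian density. -/
noncomputable def gaussPdf (x : ℝ) : ℝ := Real.exp (-x ^ 2 / 2) / Real.sqrt (2 * Real.pi)

/-- Standard Gaussian distribution function. -/
noncomputable def gaussCdf (x : ℝ) : ℝ := ∫ t in Set.Iic x, gaussPdf t

/-- Finite continued fraction `hcf k g x = x + 1/(x + 2/(⋯ + k/(g x)))`,
with `hcf 0 g = g`. -/
noncomputable def hcf : ℕ → (ℝ → ℝ) → ℝ → ℝ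
  | 0, g => g
  | (k + 1), g => hcf k (fun x => x + ((k : ℝ) + 1) / g x)

open Filter Set

lemma gaussPdf_pos (x : ℝ) : 0 < gaussPdf x := by
  unfold gaussPdf; positivity

lemma gaussPdf_eq : gaussPdf = fun x => Real.exp (-(1/2) * x ^ 2) / Real.sqrt (2 * Real.pi) := by
  funext x; unfold gaussPdf; ring_nf

lemma integrable_gaussPdf : Integrable gaussPdf := by
  rw [gaussPdf_eq]
  exact (integrable_exp_neg_mul_sq (by norm_num)).div_const _

lemma continuous_gaussPdf : Continuous gaussPdf := by
  unfold gaussPdf; fun_prop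

lemma integral_gaussPdf : ∫ x, gaussPdf x = 1 := by
  rw [gaussPdf_eq]
  rw [integral_div, integral_gaussian]
  rw [div_eq_one_iff_eq (by positivity)]
  norm_num
  ring

lemma tendsto_gaussCdf : Tendsto gaussCdf atTop (nhds 1) := by
  have h := tendsto_setIntegral_of_monotone (μ := volume) (f := gaussPdf)
    (s := fun (r : ℝ) => Iic r) (fun r => measurableSet_Iic)
    (fun a b hab => Iic_subset_Iic.2 hab) ?_
  · rw [Set.iUnion_Iic, setIntegral_univ, integral_gaussPdf] at h
    exact h
  · rw [Set.iUnion_Iic]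
    exact integrable_gaussPdf.integrableOn

lemma hasDerivAt_gaussCdf (x : ℝ) : HasDerivAt gaussCdf (gaussPdf x) x := by
  have key : ∀ y : ℝ, gaussCdf y = gaussCdf 0 + ∫ t in (0:ℝ)..y, gaussPdf t := by
    intro y
    have := intervalIntegral.integral_Iic_sub_Iic (μ := volume) (f := gaussPdf) (a := 0) (b := y)
      integrable_gaussPdf.integrableOn integrable_gaussPdf.integrableOn
    unfold gaussCdf
    rw [← this]; ring
  have h : HasDerivAt (fun y => gaussCdf 0 + ∫ t in (0:ℝ)..y, gaussPdf t) (gaussPdf x) x := by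
    apply HasDerivAt.const_add
    exact intervalIntegral.integral_hasDerivAt_right
      (integrable_gaussPdf.intervalIntegrable)
      (continuous_gaussPdf.stronglyMeasurableAtFilter _ _)
      continuous_gaussPdf.continuousAt
  exact h.congr_of_eventuallyEq (Eventually.of_forall key)

noncomputable def sbD (x : ℝ) : ℝ := Real.sqrt (8 + x ^ 2) + 3 * x

noncomputable def sb (x : ℝ) : ℝ := 4 * gaussPdf x / sbD x - (1 - gaussCdf x)

noncomputable def sbd (x : ℝ) : ℝ :=
  (4 * (-x * gaussPdf x) * sbD x - 4 * gaussPdf x * (1 / (2 * Real.sqrt (8 + x ^ 2)) * (2 * x) + 3))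
    / sbD x ^ 2 + gaussPdf x

lemma sqrt8_pos (x : ℝ) : 0 < Real.sqrt (8 + x ^ 2) := Real.sqrt_pos.2 (by positivity)

lemma sbD_pos {x : ℝ} (hx : 0 ≤ x) : 0 < sbD x := by
  have := sqrt8_pos x; unfold sbD; nlinarith

lemma hasDerivAt_gaussPdf (x : ℝ) : HasDerivAt gaussPdf (-x * gaussPdf x) x := by
  have h1 : HasDerivAt (fun y : ℝ => -y ^ 2 / 2) (-x) x := by
    have := ((hasDerivAt_pow 2 x).neg.div_const 2)
    exact this.congr_deriv (by push_cast; ring)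
  have h2 := (h1.exp).div_const (Real.sqrt (2 * Real.pi))
  have heq : Real.exp (-x ^ 2 / 2) * -x / Real.sqrt (2 * Real.pi) = -x * gaussPdf x := by
    unfold gaussPdf; ring
  exact heq ▸ h2

lemma hasDerivAt_sqrt8 (x : ℝ) :
    HasDerivAt (fun y : ℝ => Real.sqrt (8 + y ^ 2)) (1 / (2 * Real.sqrt (8 + x ^ 2)) * (2 * x)) x := by
  have hinner : HasDerivAt (fun y : ℝ => 8 + y ^ 2) (2 * x) x := by
    have := (hasDerivAt_pow 2 x).const_add 8
    exact this.congr_deriv (by push_cast; ring)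
  exact (Real.hasDerivAt_sqrt (by positivity)).comp x hinner

lemma hasDerivAt_sb {x : ℝ} (hx : 0 ≤ x) : HasDerivAt sb (sbd x) x := by
  have hnum : HasDerivAt (fun y => 4 * gaussPdf y) (4 * (-x * gaussPdf x)) x :=
    (hasDerivAt_gaussPdf x).const_mul 4
  have hden : HasDerivAt sbD (1 / (2 * Real.sqrt (8 + x ^ 2)) * (2 * x) + 3) x := by
    have := (hasDerivAt_sqrt8 x).add ((hasDerivAt_id x).const_mul 3)
    unfold sbD
    exact this.congr_deriv (by ring)
  have hg := hnum.div hden (sbD_pos hx).ne'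
  have hc : HasDerivAt (fun y => 1 - gaussCdf y) (0 - gaussPdf x) x :=
    (hasDerivAt_const x 1).sub (hasDerivAt_gaussCdf x)
  have := hg.sub hc
  unfold sb sbd
  exact this.congr_deriv (by ring)

lemma sbd_neg {x : ℝ} (hx : 0 ≤ x) : sbd x < 0 := by
  set s := Real.sqrt (8 + x ^ 2) with hsdef
  have hs : 0 < s := sqrt8_pos x
  have hs2 : s ^ 2 = 8 + x ^ 2 := Real.sq_sqrt (by positivity)
  have hD : 0 < sbD x := sbD_pos hx
  have hDeq : sbD x = s + 3 * x := rfl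
  set u := 1 / (2 * s) * (2 * x) with hudef
  have hu : u * s = x := by rw [hudef]; field_simp
  have hφ : 0 < gaussPdf x := gaussPdf_pos x
  set φ := gaussPdf x
  have key : x ^ 3 + 6 * x < s * (x ^ 2 + 2) := by
    have ha2 : (s * (x ^ 2 + 2)) ^ 2 = (x ^ 3 + 6 * x) ^ 2 + 32 := by
      rw [mul_pow, hs2]; ring
    have ha : 0 < s * (x ^ 2 + 2) := mul_pos hs (by positivity)
    have hb : 0 ≤ x ^ 3 + 6 * x := by nlinarith [pow_nonneg hx 3]
    nlinarith [ha2, ha, hb]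
  have h8 : x * s ^ 2 = 8 * x + x ^ 3 := by rw [hs2]; ring
  have hq : (s + 3 * x) ^ 2 - 4 * x * (s + 3 * x) - 4 * u - 12 < 0 := by
    nlinarith [key, hu, h8, hs, hs2]
  have hD2 : (0:ℝ) < sbD x ^ 2 := by positivity
  unfold sbd
  rw [← hsdef, ← hudef]
  rw [← lt_neg_iff_add_neg, div_lt_iff₀ hD2, hDeq]
  nlinarith [mul_pos hφ (neg_pos.2 hq)]

lemma strictAntiOn_sb : StrictAntiOn sb (Set.Ici 0) := by
  apply strictAntiOn_of_deriv_neg (convex_Ici 0)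
  · exact fun y hy => (hasDerivAt_sb hy).continuousAt.continuousWithinAt
  · intro y hy
    rw [interior_Ici] at hy
    rw [(hasDerivAt_sb hy.le).deriv]
    exact sbd_neg hy.le

lemma tendsto_gaussPdf : Tendsto gaussPdf atTop (nhds 0) := by
  have h1 : Tendsto (fun x : ℝ => -x ^ 2 / 2) atTop atBot := by
    apply Tendsto.atBot_div_const (by norm_num : (0:ℝ) < 2)
    exact tendsto_neg_atBot_iff.mpr (tendsto_pow_atTop two_ne_zero)
  have h2 : Tendsto (fun x : ℝ => Real.exp (-x ^ 2 / 2)) atTop (nhds 0) :=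
    Real.tendsto_exp_atBot.comp h1
  have h3 := h2.div_const (Real.sqrt (2 * Real.pi))
  rw [zero_div] at h3
  exact h3

lemma tendsto_sb : Tendsto sb atTop (nhds 0) := by
  have hcdf : Tendsto (fun x => 1 - gaussCdf x) atTop (nhds 0) := by
    have := tendsto_const_nhds (α := ℝ) (x := (1:ℝ)) (f := atTop) |>.sub tendsto_gaussCdf
    simpa using this
  have hg : Tendsto (fun x => 4 * gaussPdf x / sbD x) atTop (nhds 0) := by
    apply squeeze_zero' ?_ ?_ tendsto_gaussPdf
    · filter_upwards [eventually_ge_atTop (0:ℝ)] with y hy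
      exact div_nonneg (by nlinarith [gaussPdf_pos y]) (sbD_pos hy).le
    · filter_upwards [eventually_ge_atTop (1:ℝ)] with y hy
      have hD := sbD_pos (by linarith : (0:ℝ) ≤ y)
      have hφ := gaussPdf_pos y
      rw [div_le_iff₀ hD]
      have hs : (2:ℝ) ≤ Real.sqrt (8 + y ^ 2) := by
        rw [show (2:ℝ) = Real.sqrt 4 by rw [show (4:ℝ) = 2^2 by norm_num, Real.sqrt_sq]; norm_num]
        exact Real.sqrt_le_sqrt (by nlinarith)
      have : (4:ℝ) ≤ sbD y := by unfold sbD; nlinarith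
      nlinarith
  have := hg.sub hcdf
  rw [sub_zero] at this; exact this

/-- Sampford's upper bound. -/
theorem sampford_upper_bound (x : ℝ) (hx : 0 ≤ x) :
    1 - gaussCdf x < 4 * gaussPdf x / (Real.sqrt (8 + x ^ 2) + 3 * x) := by
  have hx1 : x ∈ Set.Ici (0:ℝ) := hx
  have hx2 : x + 1 ∈ Set.Ici (0:ℝ) := by simp; linarith
  have h1 : sb (x + 1) < sb x := strictAntiOn_sb hx1 hx2 (lt_add_one x)
  have h2 : 0 ≤ sb (x + 1) := by
    apply le_of_tendsto tendsto_sb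
    filter_upwards [eventually_ge_atTop (x + 1)] with y hy
    exact strictAntiOn_sb.antitoneOn hx2 (by simp; linarith : y ∈ Set.Ici (0:ℝ)) hy
  have h3 : 0 < sb x := lt_of_le_of_lt h2 h1
  unfold sb sbD at h3
  linarith
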